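/- arXiv:1601.07760 — 3 statements merged into one kernel-verified Lean document; each statement's English description precedes it below -/
import Mathlib

section
/- For a quaternionic n×n matrix M, Sdet(M) = 0 if and only if M has no inverse in Mat(n, ℍ) (i.e., there is no quaternionic matrix N with MN = NM = I_n). -/
open scoped Quaternion

/-- The simplex part of a quaternion `x = a + j·b`: the complex number `a = x₀ + x₁·i`. -/
noncomputable def qSimplex (x : ℍ[ℝ]) : ℂ := ⟨x.re, x.imI⟩

/-- The perplex part of a quaternion `x = a + j·b`: the complex number `b = x₂ − x₃·i`. -/
noncomputable def qPerplex (x : ℍ[ℝ]) : ℂ := ⟨x.imJ, -x.imK⟩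

/-- The simplex part of a quaternionic matrix. -/
noncomputable def matSimplex {α β : Type*} (M : Matrix α β ℍ[ℝ]) : Matrix α β ℂ :=
  Matrix.of fun r s => qSimplex (M r s)

/-- The perplex part of a quaternionic matrix. -/
noncomputable def matPerplex {α β : Type*} (M : Matrix α β ℍ[ℝ]) : Matrix α β ℂ :=
  Matrix.of fun r s => qPerplex (M r s)

/-- The complex-block representation `ψ(M) = [[Mˢ, −conj(Mᵖ)], [Mᵖ, conj(Mˢ)]]`
of a quaternionic matrix `M = Mˢ + j·Mᵖ`. -/
noncomputable def psi {α β : Type*} (M : Matrix α β ℍ[ℝ]) : Matrix (α ⊕ α) (β ⊕ β) ℂ :=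
  Matrix.fromBlocks (matSimplex M) (-(matPerplex M).map (starRingEnd ℂ))
    (matPerplex M) ((matSimplex M).map (starRingEnd ℂ))

/-- The Study determinant of a square quaternionic matrix: `Sdet(M) = det(ψ(M))`. -/
noncomputable def Sdet {α : Type*} [Fintype α] [DecidableEq α] (M : Matrix α α ℍ[ℝ]) : ℂ :=
  (psi M).det


section Aux

lemma qS_mul (x y : ℍ[ℝ]) :
    qSimplex (x*y) = qSimplex x * qSimplex y - (starRingEnd ℂ) (qPerplex x) * qPerplex y := by
  apply Complex.ext <;>
  simp [qSimplex, qPerplex, Complex.mul_re, Complex.mul_im, Quaternion.re_mul,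
    Quaternion.imI_mul, Quaternion.imJ_mul, Quaternion.imK_mul] <;> ring

lemma qP_mul (x y : ℍ[ℝ]) :
    qPerplex (x*y) = (starRingEnd ℂ) (qSimplex x) * qPerplex y + qPerplex x * qSimplex y := by
  apply Complex.ext <;>
  simp [qSimplex, qPerplex, Complex.mul_re, Complex.mul_im, Quaternion.re_mul,
    Quaternion.imI_mul, Quaternion.imJ_mul, Quaternion.imK_mul] <;> ring

noncomputable def qSHom : ℍ[ℝ] →+ ℂ where
  toFun := qSimplex
  map_zero' := by apply Complex.ext <;> simp [qSimplex]
  map_add' x y := by apply Complex.ext <;> simp [qSimplex]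

noncomputable def qPHom : ℍ[ℝ] →+ ℂ where
  toFun := qPerplex
  map_zero' := by apply Complex.ext <;> simp [qPerplex]
  map_add' x y := by apply Complex.ext <;> simp [qPerplex] <;> ring

variable {n : ℕ}

lemma matS_mul (M N : Matrix (Fin n) (Fin n) ℍ[ℝ]) :
    matSimplex (M * N) =
      matSimplex M * matSimplex N - (matPerplex M).map (starRingEnd ℂ) * matPerplex N := by
  ext r s
  show qSHom ((M * N) r s) = _
  rw [Matrix.mul_apply, map_sum]
  simp only [Matrix.sub_apply, Matrix.mul_apply, Matrix.map_apply, matSimplex, matPerplex,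
    Matrix.of_apply, ← Finset.sum_sub_distrib]
  exact Finset.sum_congr rfl fun k _ => qS_mul _ _

lemma matP_mul (M N : Matrix (Fin n) (Fin n) ℍ[ℝ]) :
    matPerplex (M * N) =
      (matSimplex M).map (starRingEnd ℂ) * matPerplex N + matPerplex M * matSimplex N := by
  ext r s
  show qPHom ((M * N) r s) = _
  rw [Matrix.mul_apply, map_sum]
  simp only [Matrix.add_apply, Matrix.mul_apply, Matrix.map_apply, matSimplex, matPerplex,
    Matrix.of_apply, ← Finset.sum_add_distrib]
  exact Finset.sum_congr rfl fun k _ => qP_mul _ _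

lemma matS_one : matSimplex (1 : Matrix (Fin n) (Fin n) ℍ[ℝ]) = 1 := by
  ext r s
  by_cases h : r = s <;>
  simp [matSimplex, qSimplex, Matrix.one_apply, h, Complex.ext_iff]

lemma matP_one : matPerplex (1 : Matrix (Fin n) (Fin n) ℍ[ℝ]) = 0 := by
  ext r s
  by_cases h : r = s <;>
  simp [matPerplex, qPerplex, Matrix.one_apply, h, Complex.ext_iff]

lemma psi_one : psi (1 : Matrix (Fin n) (Fin n) ℍ[ℝ]) = 1 := by
  rw [psi, matS_one, matP_one]
  simp [Matrix.fromBlocks_one]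

lemma psi_mul (M N : Matrix (Fin n) (Fin n) ℍ[ℝ]) : psi (M * N) = psi M * psi N := by
  rw [psi, psi, psi, Matrix.fromBlocks_multiply, matS_mul, matP_mul]
  rw [Matrix.fromBlocks_inj]
  refine ⟨by rw [neg_mul, sub_eq_add_neg], ?_, ?_, ?_⟩
  · ext r s
    simp [Matrix.mul_apply, Matrix.map_apply, map_sum, Finset.sum_add_distrib, neg_mul, mul_neg,
      Finset.sum_neg_distrib]
    abel
  · ext r s
    simp [Matrix.mul_apply, Finset.sum_add_distrib]
    abel
  · ext r s
    simp [Matrix.mul_apply, Matrix.map_apply, map_sum, map_sub, Finset.sum_add_distrib, neg_mul,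
      mul_neg, Finset.sum_neg_distrib, sub_eq_add_neg]
    abel

lemma psi_inj (M N : Matrix (Fin n) (Fin n) ℍ[ℝ]) (h : psi M = psi N) : M = N := by
  apply Matrix.ext
  intro r s
  have h1 : qSimplex (M r s) = qSimplex (N r s) :=
    congrFun (congrFun h (Sum.inl r)) (Sum.inl s)
  have h2 : qPerplex (M r s) = qPerplex (N r s) :=
    congrFun (congrFun h (Sum.inr r)) (Sum.inl s)
  rw [Complex.ext_iff] at h1 h2
  simp only [qSimplex, qPerplex, neg_inj] at h1 h2
  exact Quaternion.ext (a := M r s) (b := N r s) h1.1 h1.2 h2.1 h2.2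

noncomputable def Jmat (n : ℕ) : Matrix (Fin n ⊕ Fin n) (Fin n ⊕ Fin n) ℂ :=
  Matrix.fromBlocks 0 (-1) 1 0

lemma psi_J (M : Matrix (Fin n) (Fin n) ℍ[ℝ]) :
    psi M * Jmat n = Jmat n * (psi M).map (starRingEnd ℂ) := by
  rw [psi, Jmat]
  have : (Matrix.fromBlocks (matSimplex M) (-(matPerplex M).map (starRingEnd ℂ))
      (matPerplex M) ((matSimplex M).map (starRingEnd ℂ))).map (starRingEnd ℂ) =
      Matrix.fromBlocks ((matSimplex M).map (starRingEnd ℂ)) (-(matPerplex M))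
        ((matPerplex M).map (starRingEnd ℂ)) (matSimplex M) := by
    ext (r|r) (s|s) <;> simp [Matrix.fromBlocks]
  rw [this, Matrix.fromBlocks_multiply, Matrix.fromBlocks_multiply]
  rw [Matrix.fromBlocks_inj]
  refine ⟨?_, ?_, ?_, ?_⟩ <;> ext r s <;>
    simp [Matrix.mul_apply, Matrix.one_apply, Finset.sum_ite_eq, mul_ite]

lemma mulJ_inl (X : Matrix (Fin n ⊕ Fin n) (Fin n ⊕ Fin n) ℂ) (i : Fin n ⊕ Fin n) (s : Fin n) :
    (X * Jmat n) i (Sum.inl s) = X i (Sum.inr s) := by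
  simp [Jmat, Matrix.mul_apply, Fintype.sum_sum_type, Matrix.one_apply, mul_ite]

lemma mulJ_inr (X : Matrix (Fin n ⊕ Fin n) (Fin n ⊕ Fin n) ℂ) (i : Fin n ⊕ Fin n) (s : Fin n) :
    (X * Jmat n) i (Sum.inr s) = -X i (Sum.inl s) := by
  simp [Jmat, Matrix.mul_apply, Fintype.sum_sum_type, Matrix.one_apply, mul_ite]

lemma Jmul_inl (Y : Matrix (Fin n ⊕ Fin n) (Fin n ⊕ Fin n) ℂ) (r : Fin n) (j : Fin n ⊕ Fin n) :
    (Jmat n * Y) (Sum.inl r) j = -Y (Sum.inr r) j := by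
  simp [Jmat, Matrix.mul_apply, Fintype.sum_sum_type, Matrix.one_apply, ite_mul]

lemma Jmul_inr (Y : Matrix (Fin n ⊕ Fin n) (Fin n ⊕ Fin n) ℂ) (r : Fin n) (j : Fin n ⊕ Fin n) :
    (Jmat n * Y) (Sum.inr r) j = Y (Sum.inl r) j := by
  simp [Jmat, Matrix.mul_apply, Fintype.sum_sum_type, Matrix.one_apply, ite_mul]

end Aux

theorem sdet_eq_zero_iff_not_invertible {n : ℕ} (M : Matrix (Fin n) (Fin n) ℍ[ℝ]) :
    Sdet M = 0 ↔ ¬ ∃ N : Matrix (Fin n) (Fin n) ℍ[ℝ], M * N = 1 ∧ N * M = 1 := by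
  constructor
  · rintro h ⟨N, hMN, _⟩
    have h1 : (psi M).det * (psi N).det = 1 := by
      rw [← Matrix.det_mul, ← psi_mul, hMN, psi_one, Matrix.det_one]
    rw [Sdet] at h
    rw [h, zero_mul] at h1
    exact zero_ne_one h1
  · intro h
    by_contra hd
    apply h
    have hu : IsUnit (psi M).det := isUnit_iff_ne_zero.mpr hd
    set X := (psi M)⁻¹ with hXdef
    have hX1 : psi M * X = 1 := Matrix.mul_nonsing_inv _ hu
    have hX2 : X * psi M = 1 := Matrix.nonsing_inv_mul _ hu
    have hmapc : (psi M).map (starRingEnd ℂ) * X.map (starRingEnd ℂ) = 1 := by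
      rw [← Matrix.map_mul, hX1, Matrix.map_one _ (map_zero _) (map_one _)]
    have hXJ : X * Jmat n = Jmat n * X.map (starRingEnd ℂ) := by
      calc X * Jmat n
          = X * Jmat n * ((psi M).map (starRingEnd ℂ) * X.map (starRingEnd ℂ)) := by
            rw [hmapc, mul_one]
        _ = X * (Jmat n * (psi M).map (starRingEnd ℂ)) * X.map (starRingEnd ℂ) := by
            simp only [mul_assoc]
        _ = X * (psi M * Jmat n) * X.map (starRingEnd ℂ) := by rw [psi_J]
        _ = (X * psi M) * Jmat n * X.map (starRingEnd ℂ) := by simp only [mul_assoc]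
        _ = Jmat n * X.map (starRingEnd ℂ) := by rw [hX2, one_mul]
    set N : Matrix (Fin n) (Fin n) ℍ[ℝ] := Matrix.of fun r s =>
      (⟨(X (Sum.inl r) (Sum.inl s)).re, (X (Sum.inl r) (Sum.inl s)).im,
        (X (Sum.inr r) (Sum.inl s)).re, -(X (Sum.inr r) (Sum.inl s)).im⟩ : ℍ[ℝ]) with hNdef
    have hNrs : ∀ r s, N r s = (⟨(X (Sum.inl r) (Sum.inl s)).re, (X (Sum.inl r) (Sum.inl s)).im,
        (X (Sum.inr r) (Sum.inl s)).re, -(X (Sum.inr r) (Sum.inl s)).im⟩ : ℍ[ℝ]) := fun r s => rfl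
    have hpsiN : psi N = X := by
      ext (r | r) (s | s)
      · show matSimplex N r s = _
        simp [matSimplex, qSimplex, hNrs, Complex.ext_iff]
      · show (-(matPerplex N).map (starRingEnd ℂ)) r s = _
        have key := congrFun (congrFun hXJ (Sum.inl r)) (Sum.inl s)
        rw [mulJ_inl, Jmul_inl] at key
        simp only [Matrix.neg_apply, Matrix.map_apply, matPerplex, Matrix.of_apply, qPerplex,
          hNrs]
        rw [key]
        apply Complex.ext <;> simp [Complex.ext_iff, Complex.conj_re, Complex.conj_im]
      · show matPerplex N r s = _
        simp [matPerplex, qPerplex, hNrs, Complex.ext_iff]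
      · show ((matSimplex N).map (starRingEnd ℂ)) r s = _
        have key := congrFun (congrFun hXJ (Sum.inr r)) (Sum.inl s)
        rw [mulJ_inl, Jmul_inr] at key
        simp only [Matrix.map_apply, matSimplex, Matrix.of_apply, qSimplex, hNrs]
        rw [key]
        apply Complex.ext <;> simp
    refine ⟨N, ?_, ?_⟩
    · apply psi_inj
      rw [psi_mul, hpsiN, hX1, psi_one]
    · apply psi_inj
      rw [psi_mul, hpsiN, hX2, psi_one]
end

section
/- Let M be a quaternionic n×n matrix, α ∈ ℍ, and let r ≠ k be row indices (resp. column indices). If N is obtained from M by replacing row r with (row r) + α·(row k) (left-multiplication by α), then Sdet(N) = Sdet(M). Similarly, if N is obtained from M by replacing column r with (column r) + (column k)·α (right-multiplication by α), then Sdet(N) = Sdet(M). -/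
open scoped Quaternion

lemma qSimplex_add (x y : ℍ[ℝ]) : qSimplex (x + y) = qSimplex x + qSimplex y := by
  simp [qSimplex, Complex.ext_iff]

lemma qPerplex_add (x y : ℍ[ℝ]) : qPerplex (x + y) = qPerplex x + qPerplex y := by
  simp [qPerplex, Complex.ext_iff]
  ring

lemma qSimplex_mul (x y : ℍ[ℝ]) :
    qSimplex (x * y) = qSimplex x * qSimplex y - (starRingEnd ℂ) (qPerplex x) * qPerplex y := by
  simp [qSimplex, qPerplex, Complex.ext_iff, Quaternion.re_mul, Quaternion.imI_mul,
    Complex.mul_re, Complex.mul_im]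
  constructor <;> ring

lemma qPerplex_mul (x y : ℍ[ℝ]) :
    qPerplex (x * y) = qPerplex x * qSimplex y + (starRingEnd ℂ) (qSimplex x) * qPerplex y := by
  simp [qSimplex, qPerplex, Complex.ext_iff, Quaternion.imJ_mul, Quaternion.imK_mul,
    Complex.mul_re, Complex.mul_im]
  constructor <;> ring

lemma det_updateRow2 {m : Type*} [Fintype m] [DecidableEq m]
    (A : Matrix m m ℂ) {i j j' : m} (hij : i ≠ j) (hij' : i ≠ j') (c d : ℂ) :
    (A.updateRow i (A i + c • A j + d • A j')).det = A.det := by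
  set B := A.updateRow i (A i + c • A j) with hB
  have h : A.updateRow i (A i + c • A j + d • A j') = B.updateRow i (B i + d • B j') := by
    have h1 : B i = A i + c • A j := Matrix.updateRow_self
    have h2 : B j' = A j' := Matrix.updateRow_ne hij'.symm
    rw [h1, h2]
    ext p q
    by_cases h : p = i <;> simp [hB, Matrix.updateRow_apply, h]
  rw [h, Matrix.det_updateRow_add_smul_self B hij', hB,
    Matrix.det_updateRow_add_smul_self A hij]

lemma det_update2x2_row {m : Type*} [Fintype m] [DecidableEq m]
    (A : Matrix m m ℂ) {i i' j j' : m} (hij : i ≠ j) (hij' : i ≠ j')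
    (hi'i : i' ≠ i) (hi'j : i' ≠ j) (hi'j' : i' ≠ j') (a b c d : ℂ) :
    ((A.updateRow i (A i + a • A j + b • A j')).updateRow i'
      (A i' + c • A j + d • A j')).det = A.det := by
  set B := A.updateRow i (A i + a • A j + b • A j') with hB
  have e1 : A i' = B i' := (Matrix.updateRow_ne hi'i).symm
  have e2 : A j = B j := (Matrix.updateRow_ne hij.symm).symm
  have e3 : A j' = B j' := (Matrix.updateRow_ne hij'.symm).symm
  rw [e1, e2, e3, det_updateRow2 B hi'j hi'j', hB, det_updateRow2 A hij hij']

lemma det_updateCol2 {m : Type*} [Fintype m] [DecidableEq m]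
    (A : Matrix m m ℂ) {i j j' : m} (hij : i ≠ j) (hij' : i ≠ j') (c d : ℂ) :
    (A.updateCol i (fun p => A p i + c • A p j + d • A p j')).det = A.det := by
  rw [← Matrix.det_transpose, ← Matrix.updateRow_transpose, ← Matrix.det_transpose A]
  have he : (fun p => A p i + c • A p j + d • A p j')
      = A.transpose i + c • A.transpose j + d • A.transpose j' := by
    funext p; simp [Matrix.transpose_apply]
  rw [he]
  exact det_updateRow2 A.transpose hij hij' c d

lemma det_update2x2_col {m : Type*} [Fintype m] [DecidableEq m]
    (A : Matrix m m ℂ) {i i' j j' : m} (hij : i ≠ j) (hij' : i ≠ j')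
    (hi'i : i' ≠ i) (hi'j : i' ≠ j) (hi'j' : i' ≠ j') (a b c d : ℂ) :
    ((A.updateCol i (fun p => A p i + a • A p j + b • A p j')).updateCol i'
      (fun p => A p i' + c • A p j + d • A p j')).det = A.det := by
  set B := A.updateCol i (fun p => A p i + a • A p j + b • A p j') with hB
  have e : (fun p => A p i' + c • A p j + d • A p j')
      = fun p => B p i' + c • B p j + d • B p j' := by
    funext p
    have e1 : B p i' = A p i' := Matrix.updateCol_ne hi'i
    have e2 : B p j = A p j := Matrix.updateCol_ne hij.symm
    have e3 : B p j' = A p j' := Matrix.updateCol_ne hij'.symm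
    rw [e1, e2, e3]
  rw [e, det_updateCol2 B hi'j hi'j', hB, det_updateCol2 A hij hij']

theorem sdet_row_col_operation {n : ℕ} (M : Matrix (Fin n) (Fin n) ℍ[ℝ]) (α : ℍ[ℝ])
    (r k : Fin n) (hrk : r ≠ k) :
    Sdet (M.updateRow r (fun s => M r s + α * M k s)) = Sdet M ∧
    Sdet (M.updateCol r (fun i => M i r + M i k * α)) = Sdet M := by
  have hkr : k ≠ r := hrk.symm
  constructor
  · have hpsi : psi (M.updateRow r fun s => M r s + α * M k s) =
        ((psi M).updateRow (Sum.inl r) ((psi M) (Sum.inl r)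
            + qSimplex α • (psi M) (Sum.inl k)
            + (-(starRingEnd ℂ (qPerplex α))) • (psi M) (Sum.inr k))).updateRow (Sum.inr r)
          ((psi M) (Sum.inr r) + qPerplex α • (psi M) (Sum.inl k)
            + (starRingEnd ℂ (qSimplex α)) • (psi M) (Sum.inr k)) := by
      ext i j
      rcases i with i | i <;> rcases j with j | j <;>
        rcases eq_or_ne i r with rfl | hir <;>
        simp_all [psi, matSimplex, matPerplex, Matrix.updateRow_apply,
          qSimplex_add, qPerplex_add, qSimplex_mul, qPerplex_mul, map_add, map_mul, map_sub] <;>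
        ring
    rw [Sdet, Sdet, hpsi,
      det_update2x2_row (psi M)
        (show (Sum.inl r : Fin n ⊕ Fin n) ≠ Sum.inl k by simp [hrk])
        (show (Sum.inl r : Fin n ⊕ Fin n) ≠ Sum.inr k by simp)
        (show (Sum.inr r : Fin n ⊕ Fin n) ≠ Sum.inl r by simp)
        (show (Sum.inr r : Fin n ⊕ Fin n) ≠ Sum.inl k by simp)
        (show (Sum.inr r : Fin n ⊕ Fin n) ≠ Sum.inr k by simp [hrk])]
  · have hpsi : psi (M.updateCol r fun i => M i r + M i k * α) =
        ((psi M).updateCol (Sum.inl r) (fun p => (psi M) p (Sum.inl r)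
            + qSimplex α • (psi M) p (Sum.inl k)
            + qPerplex α • (psi M) p (Sum.inr k))).updateCol (Sum.inr r)
          (fun p => (psi M) p (Sum.inr r)
            + (-(starRingEnd ℂ (qPerplex α))) • (psi M) p (Sum.inl k)
            + (starRingEnd ℂ (qSimplex α)) • (psi M) p (Sum.inr k)) := by
      ext i j
      rcases i with i | i <;> rcases j with j | j <;>
        rcases eq_or_ne j r with rfl | hjr <;>
        simp_all [psi, matSimplex, matPerplex, Matrix.updateCol_apply,
          qSimplex_add, qPerplex_add, qSimplex_mul, qPerplex_mul, map_add, map_mul, map_sub] <;>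
        ring
    rw [Sdet, Sdet, hpsi,
      det_update2x2_col (psi M)
        (show (Sum.inl r : Fin n ⊕ Fin n) ≠ Sum.inl k by simp [hrk])
        (show (Sum.inl r : Fin n ⊕ Fin n) ≠ Sum.inr k by simp)
        (show (Sum.inr r : Fin n ⊕ Fin n) ≠ Sum.inl r by simp)
        (show (Sum.inr r : Fin n ⊕ Fin n) ≠ Sum.inl k by simp)
        (show (Sum.inr r : Fin n ⊕ Fin n) ≠ Sum.inr k by simp [hrk])]
end

section
/- Let σ be a fixed-point-free involution on a finite set of size 2m and let J_0 be its 2m×2m permutation matrix, regarded as a quaternionic matrix (so (J_0)_{ef} = 1 if f = σ(e) and 0 otherwise, with σ(e) ≠ e and σ(σ(e)) = e for all e). Then for every quaternion t, Sdet(I_{2m} + t·J_0) = |1 − t²|^{2m}. -/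
open scoped Quaternion

lemma qSimplex_zero : qSimplex 0 = 0 := by
  simp [qSimplex, Complex.ext_iff]

lemma qSimplex_one : qSimplex 1 = 1 := by
  simp [qSimplex, Complex.ext_iff]

lemma qPerplex_zero : qPerplex 0 = 0 := by
  simp [qPerplex, Complex.ext_iff]

lemma qPerplex_one : qPerplex 1 = 0 := by
  simp [qPerplex, Complex.ext_iff]

set_option maxHeartbeats 1600000 in
lemma det_aux (a b : ℂ) :
    (!![1, a, 0, -(starRingEnd ℂ) b; a, 1, -(starRingEnd ℂ) b, 0;
        0, b, 1, (starRingEnd ℂ) a; b, 0, (starRingEnd ℂ) a, 1]).det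
      = (1 + a * (starRingEnd ℂ) a + b * (starRingEnd ℂ) b) ^ 2
          - (a + (starRingEnd ℂ) a) ^ 2 := by
  simp [Matrix.det_succ_row_zero, Fin.sum_univ_succ, Fin.succAbove, Fin.castSucc, Fin.castAdd, Fin.castLE,
    Matrix.cons_val_succ, Matrix.cons_val_zero, Matrix.cons_val_one, Matrix.head_cons]
  ring

lemma psi_submatrix {α β γ δ : Type*} (M : Matrix α β ℍ[ℝ]) (f : γ → α) (g : δ → β) :
    psi (M.submatrix f g) = (psi M).submatrix (Sum.map f f) (Sum.map g g) := by
  ext i j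
  cases i <;> cases j <;> rfl

theorem sdet_one_add_smul_involution {m : ℕ} (σ : Fin (2 * m) → Fin (2 * m))
    (hfix : ∀ e, σ e ≠ e) (hinv : ∀ e, σ (σ e) = e) (t : ℍ[ℝ]) :
    Sdet (1 + t • (Matrix.of fun e f => if f = σ e then (1 : ℍ[ℝ]) else 0)) =
      ((‖1 - t ^ 2‖ ^ (2 * m) : ℝ) : ℂ) := by
  classical
  set M : Matrix (Fin (2 * m)) (Fin (2 * m)) ℍ[ℝ] :=
    1 + t • (Matrix.of fun e f => if f = σ e then (1 : ℍ[ℝ]) else 0) with hM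
  have hσlt : ∀ x : Fin (2 * m), ¬ x < σ x → σ x < x := fun x h =>
    lt_of_le_of_ne (not_lt.mp h) (hfix x)
  set S := {x : Fin (2 * m) // x < σ x} with hS
  -- the equivalence pairing each orbit
  let E : S ⊕ S ≃ Fin (2 * m) :=
    { toFun := Sum.elim Subtype.val (fun s => σ s.val)
      invFun := fun x => if h : x < σ x then Sum.inl ⟨x, h⟩
        else Sum.inr ⟨σ x, by rw [hinv]; exact hσlt x h⟩
      left_inv := by
        rintro (s | s)
        · exact dif_pos s.2
        · have h1 : ¬ σ s.val < σ (σ s.val) := by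
            rw [hinv]; exact not_lt.mpr s.2.le
          refine (dif_neg h1).trans ?_
          congr 1
          exact Subtype.ext (hinv s.val)
      right_inv := by
        intro x
        by_cases h : x < σ x
        · simp [h]
        · simp [h, hinv] }
  -- cardinality of S
  have hcard : Fintype.card S = m := by
    have hbij : (Finset.univ.filter fun x : Fin (2 * m) => x < σ x).card
        = (Finset.univ.filter fun x : Fin (2 * m) => ¬ x < σ x).card := by
      apply Finset.card_bij (fun x _ => σ x)
      · intro x hx
        simp only [Finset.mem_filter, Finset.mem_univ, true_and] at hx ⊢
        rw [hinv]
        exact not_lt.mpr hx.le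
      · intro x hx y hy h
        have := congrArg σ h
        rwa [hinv, hinv] at this
      · intro y hy
        simp only [Finset.mem_filter, Finset.mem_univ, true_and] at hy ⊢
        exact ⟨σ y, by rw [hinv]; exact hσlt y hy, hinv y⟩
    have htot := Finset.card_filter_add_card_filter_not
      (s := (Finset.univ : Finset (Fin (2 * m)))) (p := fun x => x < σ x)
    rw [Fintype.card_subtype]
    simp only [Finset.card_univ, Fintype.card_fin] at htot
    omega
  -- the reindexed matrix is a nice block matrix
  have hblocks : M.submatrix E E = Matrix.fromBlocks 1 (t • 1) (t • 1) 1 := by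
    have key : ∀ s s' : S, s'.val ≠ σ s.val := by
      rintro ⟨s, hs⟩ ⟨s', hs'⟩ h
      simp only at h
      rw [h, hinv] at hs'
      exact absurd hs (asymm hs')
    apply Matrix.ext
    intro i j
    rcases i with s | s <;> rcases j with s' | s'
    · have h2 := key s s'
      have h3 : (s.val = s'.val) ↔ s = s' := Subtype.val_inj
      simp [hM, Matrix.one_apply, Matrix.add_apply, h2, h3, E]
    · have h1 : s.val ≠ σ s'.val := key s' s
      have h2 : σ s'.val = σ s.val ↔ s = s' := by
        constructor
        · intro h
          have := congrArg σ h
          rw [hinv, hinv] at this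
          exact Subtype.ext this.symm
        · rintro rfl; rfl
      simp [hM, Matrix.one_apply, Matrix.add_apply, h1, h2, E, eq_comm (a := s)]
    · have h1 : σ s.val ≠ s'.val := fun h => key s s' h.symm
      have h2 : s'.val = σ (σ s.val) ↔ s = s' := by
        rw [hinv]
        constructor
        · intro h; exact Subtype.ext h.symm
        · rintro rfl; rfl
      simp [hM, Matrix.one_apply, Matrix.add_apply, h1, h2, E, eq_comm (a := s)]
    · have h1 : σ s.val = σ s'.val ↔ s = s' := by
        constructor
        · intro h
          have := congrArg σ h
          rw [hinv, hinv] at this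
          exact Subtype.ext this
        · rintro rfl; rfl
      have h2 : σ s'.val ≠ σ (σ s.val) := by
        rw [hinv]; exact fun h => key s' s h.symm
      simp [hM, Matrix.one_apply, Matrix.add_apply, h1, h2, E]
  set a : ℂ := qSimplex t with ha
  set b : ℂ := qPerplex t with hb
  set K : Matrix (Fin 4) (Fin 4) ℂ :=
    !![1, a, 0, -(starRingEnd ℂ b);
       a, 1, -(starRingEnd ℂ b), 0;
       0, b, 1, (starRingEnd ℂ a);
       b, 0, (starRingEnd ℂ a), 1] with hK
  -- the equivalence flattening the four blocks
  let g : Fin 4 × S ≃ (S ⊕ S) ⊕ (S ⊕ S) :=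
    { toFun := fun p => ![Sum.inl (Sum.inl p.2), Sum.inl (Sum.inr p.2),
        Sum.inr (Sum.inl p.2), Sum.inr (Sum.inr p.2)] p.1
      invFun := Sum.elim (Sum.elim (fun s => (0, s)) (fun s => (1, s)))
        (Sum.elim (fun s => (2, s)) (fun s => (3, s)))
      left_inv := by rintro ⟨i, s⟩; fin_cases i <;> rfl
      right_inv := by rintro ((s | s) | (s | s)) <;> rfl }
  have hKron : (psi (Matrix.fromBlocks 1 (t • 1) (t • 1) (1 : Matrix S S ℍ[ℝ]))).submatrix g g
      = Matrix.kroneckerMap (· * ·) K (1 : Matrix S S ℂ) := by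
    ext ⟨i, s⟩ ⟨j, s'⟩
    fin_cases i <;> fin_cases j <;>
      simp [psi, matSimplex, matPerplex, Matrix.one_apply, Matrix.smul_apply, smul_ite,
        smul_zero, smul_eq_mul, mul_one, apply_ite qSimplex, apply_ite qPerplex,
        apply_ite (starRingEnd ℂ), apply_ite (Neg.neg (α := ℂ)), neg_zero, qSimplex_zero, qSimplex_one, qPerplex_zero, qPerplex_one,
        hK, ha, hb, g, mul_ite, mul_one, mul_zero, map_zero]
  have hdet : Sdet M = K.det ^ m := by
    unfold Sdet
    rw [← Matrix.det_submatrix_equiv_self (Equiv.sumCongr E E) (psi M),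
      show ⇑(E.sumCongr E) = Sum.map (⇑E) (⇑E) from rfl, ← psi_submatrix,
      hblocks, ← Matrix.det_submatrix_equiv_self g, hKron, Matrix.det_kronecker]
    simp [hcard]
  have hnorm : (‖1 - t ^ 2‖ ^ 2 : ℝ) = Quaternion.normSq (1 - t ^ 2) := by
    rw [sq, ← Quaternion.normSq_eq_norm_mul_self]
  have hdetK : K.det = ((‖1 - t ^ 2‖ ^ 2 : ℝ) : ℂ) := by
    rw [hnorm, hK, det_aux]
    apply Complex.ext <;>
      simp [ha, hb, qSimplex, qPerplex, Quaternion.normSq_def',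
        pow_two, Quaternion.re_mul, Quaternion.imI_mul, Quaternion.imJ_mul,
        Quaternion.imK_mul] <;>
      try ring
  rw [hdet, hdetK, ← Complex.ofReal_pow, ← pow_mul, mul_comm 2 m, pow_mul]
end
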